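/- Let R be a Dedekind domain, 𝔭 a non-zero prime ideal of R, and T a 𝔭-primary torsion R-module that is not bounded (i.e. 𝔭ⁿ T ≠ 0 for every positive integer n). Then there exists a surjective R-module homomorphism from T onto a non-zero divisible R-module. -/

import Mathlib

set_option linter.unusedSectionVars false
set_option linter.unusedVariables false
set_option maxHeartbeats 1000000

universe w

attribute [-instance] instAlgebraAtPrimeFractionRing

section Aux
variable {R : Type w} [CommRing R] [IsDomain R] [IsDedekindDomain R]
variable {𝔭 : Ideal R}

/-- inverse mod 𝔭^k for s ∉ 𝔭 -/
theorem aux_exists_inv_mod (h𝔭 : 𝔭.IsPrime) (h𝔭0 : 𝔭 ≠ ⊥) {s : R} (hs : s ∉ 𝔭) (k : ℕ) :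
    ∃ c : R, c * s - 1 ∈ 𝔭 ^ k := by
  have hmax : 𝔭.IsMaximal := h𝔭.isMaximal h𝔭0
  have htop : 𝔭 ^ k ⊔ Ideal.span {s} = ⊤ := by
    by_contra h
    obtain ⟨M, hM, hle⟩ := Ideal.exists_le_maximal _ h
    have h1 : 𝔭 ^ k ≤ M := le_trans le_sup_left hle
    have h2 : 𝔭 ≤ M := hM.isPrime.le_of_pow_le h1
    have h3 : 𝔭 = M := hmax.eq_of_le hM.ne_top h2
    exact hs (h3 ▸ hle (le_sup_right (a := 𝔭 ^ k) (Ideal.subset_span rfl)))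
  have h1 : (1 : R) ∈ 𝔭 ^ k ⊔ Ideal.span {s} := htop ▸ Submodule.mem_top
  rw [Submodule.mem_sup] at h1
  obtain ⟨x, hx, y, hy, hxy⟩ := h1
  rw [Ideal.mem_span_singleton'] at hy
  obtain ⟨c, rfl⟩ := hy
  exact ⟨c, by simpa [← hxy] using hx⟩

/-- exact valuation -/
theorem aux_exists_val (h𝔭 : 𝔭.IsPrime) {a : R} (ha : a ≠ 0) :
    ∃ d : ℕ, a ∈ 𝔭 ^ d ∧ a ∉ 𝔭 ^ (d + 1) := by
  have hKrull : (⨅ n : ℕ, 𝔭 ^ n) = ⊥ := Ideal.iInf_pow_eq_bot_of_isDomain (I := 𝔭) h𝔭.ne_top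
  have hex : ∃ n, a ∉ 𝔭 ^ n := by
    by_contra h
    push_neg at h
    have : a ∈ (⨅ n : ℕ, 𝔭 ^ n) := Submodule.mem_iInf (fun n : ℕ => 𝔭 ^ n) |>.mpr h
    rw [hKrull] at this
    exact ha (by simpa using this)
  classical
  have h0 : Nat.find hex ≠ 0 := by
    intro h
    have := Nat.find_spec hex
    rw [h] at this
    simp at this
  obtain ⟨d, hd⟩ := Nat.exists_eq_succ_of_ne_zero h0
  refine ⟨d, ?_, ?_⟩
  · have := Nat.find_min hex (m := d) (by omega)
    simpa using this
  · have := Nat.find_spec hex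
    rwa [hd] at this


/-- key division lemma: if a₀ has exact valuation d and a ∈ 𝔭^d then s·a = c·a₀ for some s ∉ 𝔭. -/
theorem aux_div (h𝔭 : 𝔭.IsPrime) {a₀ a : R} {d : ℕ}
    (ha₀d : a₀ ∈ 𝔭 ^ d) (ha₀d1 : a₀ ∉ 𝔭 ^ (d + 1)) (ha : a ∈ 𝔭 ^ d) :
    ∃ s ∉ 𝔭, ∃ c : R, s * a = c * a₀ := by
  have hdvd : 𝔭 ^ d ∣ Ideal.span {a₀} :=
    Ideal.dvd_iff_le.mpr ((Ideal.span_singleton_le_iff_mem _).mpr ha₀d)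
  obtain ⟨b₀, hb₀⟩ := hdvd
  have hb₀nle : ¬ b₀ ≤ 𝔭 := by
    intro hle
    apply ha₀d1
    have : Ideal.span {a₀} ≤ 𝔭 ^ (d + 1) := by
      rw [hb₀, pow_succ]
      exact Ideal.mul_mono_right hle
    exact this (Ideal.subset_span rfl)
  obtain ⟨s, hsb₀, hs𝔭⟩ := SetLike.not_le_iff_exists.mp hb₀nle
  have hmem : a * s ∈ Ideal.span {a₀} := by
    rw [hb₀]
    exact Ideal.mul_mem_mul ha hsb₀
  rw [Ideal.mem_span_singleton'] at hmem
  obtain ⟨c, hc⟩ := hmem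
  exact ⟨s, hs𝔭, c, by linear_combination -hc⟩

/-- descending s: s*x ∈ 𝔭^k, s ∉ 𝔭 implies x ∈ 𝔭^k -/
theorem aux_unsat (h𝔭 : 𝔭.IsPrime) (h𝔭0 : 𝔭 ≠ ⊥) {x s : R} {k : ℕ}
    (hs : s ∉ 𝔭) (h : s * x ∈ 𝔭 ^ k) : x ∈ 𝔭 ^ k := by
  have hp : Prime 𝔭 := Ideal.prime_of_isPrime h𝔭0 h𝔭
  have h1 : 𝔭 ^ k ∣ Ideal.span {s} * Ideal.span {x} := by
    rw [Ideal.span_singleton_mul_span_singleton, Ideal.dvd_iff_le,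
      Ideal.span_singleton_le_iff_mem]
    exact h
  have h2 : ¬ 𝔭 ∣ Ideal.span {s} := by
    rw [Ideal.dvd_iff_le, Ideal.span_singleton_le_iff_mem]
    exact hs
  have h3 : 𝔭 ^ k ∣ Ideal.span {x} := hp.pow_dvd_of_dvd_mul_left k h2 h1
  rw [Ideal.dvd_iff_le, Ideal.span_singleton_le_iff_mem] at h3
  exact h3

/-- a uniformizer-ish element exists -/
theorem aux_exists_pi (h𝔭 : 𝔭.IsPrime) (h𝔭0 : 𝔭 ≠ ⊥) : ∃ π : R, π ∈ 𝔭 ∧ π ∉ 𝔭 ^ 2 := by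
  have hlt : 𝔭 ^ 2 < 𝔭 := by
    have := Ideal.pow_lt_self 𝔭 h𝔭0 h𝔭.ne_top 2 le_rfl
    simpa using this
  obtain ⟨π, hπ, hπ2⟩ := SetLike.exists_of_lt hlt
  exact ⟨π, hπ, hπ2⟩

/-- for every k there is s ∉ 𝔭 with s·𝔭^k ⊆ (π^k) -/
theorem aux_smul_pow_le (h𝔭 : 𝔭.IsPrime) (h𝔭0 : 𝔭 ≠ ⊥) {π : R} (hπ : π ∈ 𝔭) (hπ2 : π ∉ 𝔭 ^ 2)
    (k : ℕ) : ∃ s ∉ 𝔭, ∀ b ∈ 𝔭 ^ k, ∃ c : R, s * b = c * π ^ k := by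
  have hπd : π ∈ 𝔭 ^ 1 := by simpa using hπ
  have hπd1 : π ∉ 𝔭 ^ (1 + 1) := by simpa using hπ2
  -- 𝔭 ∣ (π), (π) = 𝔭 * q, q ⊄ 𝔭
  have hdvd : 𝔭 ∣ Ideal.span {π} :=
    Ideal.dvd_iff_le.mpr ((Ideal.span_singleton_le_iff_mem _).mpr hπ)
  obtain ⟨q, hq⟩ := hdvd
  have hqnle : ¬ q ≤ 𝔭 := by
    intro hle
    apply hπ2
    have : Ideal.span {π} ≤ 𝔭 ^ 2 := by
      rw [hq, pow_two]
      exact Ideal.mul_mono_right hle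
    exact this (Ideal.subset_span rfl)
  have hqknle : ¬ q ^ k ≤ 𝔭 := fun hle => hqnle (h𝔭.le_of_pow_le hle)
  obtain ⟨s, hsq, hs𝔭⟩ := SetLike.not_le_iff_exists.mp hqknle
  refine ⟨s, hs𝔭, fun b hb => ?_⟩
  have hmem : b * s ∈ Ideal.span {π ^ k} := by
    rw [← Ideal.span_singleton_pow, hq, mul_pow]
    exact Ideal.mul_mem_mul hb hsq
  rw [Ideal.mem_span_singleton'] at hmem
  obtain ⟨c, hc⟩ := hmem
  exact ⟨c, by linear_combination -hc⟩

end Aux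


section Pruefer

variable (R : Type w) [CommRing R] [IsDomain R] [IsDedekindDomain R]
variable (𝔭 : Ideal R) [h𝔭 : 𝔭.IsPrime]

/-- Localization of `R` at `𝔭`. -/
abbrev Rp : Type w := Localization.AtPrime 𝔭

/-- Fraction field of the localization. -/
abbrev Kp : Type w := FractionRing (Rp R 𝔭)

/-- The composite ring map `R → Kp`. -/
noncomputable def KofR : R →+* Kp R 𝔭 :=
  (algebraMap (Rp R 𝔭) (Kp R 𝔭)).comp (algebraMap R (Rp R 𝔭))

/-- The image of the localization inside its fraction field, as a submodule. -/
noncomputable def Ap : Submodule (Rp R 𝔭) (Kp R 𝔭) :=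
  LinearMap.range (Algebra.linearMap (Rp R 𝔭) (Kp R 𝔭))

/-- The candidate divisible module. -/
abbrev Ep : Type w := Kp R 𝔭 ⧸ Ap R 𝔭

end Pruefer

section PrueferLemmas

variable {R : Type w} [CommRing R] [IsDomain R] [IsDedekindDomain R]
variable {𝔭 : Ideal R} [h𝔭 : 𝔭.IsPrime] {π : R}

theorem injRRp : Function.Injective (algebraMap R (Rp R 𝔭)) :=
  IsLocalization.injective _ 𝔭.primeCompl_le_nonZeroDivisors

theorem injRpKp : Function.Injective (algebraMap (Rp R 𝔭) (Kp R 𝔭)) :=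
  IsFractionRing.injective _ _

theorem injRKp : Function.Injective (KofR R 𝔭) :=
  (injRpKp (𝔭 := 𝔭)).comp (injRRp (𝔭 := 𝔭))

theorem smulRKp (r : R) (y : Kp R 𝔭) : r • y = KofR R 𝔭 r * y := by
  rw [← algebraMap_smul (Rp R 𝔭) r y, Algebra.smul_def]
  rfl

/-- `s ∉ 𝔭` acts invertibly: cancellation on any module over `Rp`. -/
theorem ep_smul_cancel {s : R} (hs : s ∉ 𝔭) {u v : Ep R 𝔭} (h : s • u = s • v) : u = v := by
  have hu : IsUnit (algebraMap R (Rp R 𝔭) s) := IsLocalization.map_units _ (⟨s, hs⟩ : 𝔭.primeCompl)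
  obtain ⟨w, hw⟩ := isUnit_iff_exists_inv.mp hu
  have h' : (algebraMap R (Rp R 𝔭) s) • u = (algebraMap R (Rp R 𝔭) s) • v := by
    rwa [algebraMap_smul, algebraMap_smul]
  calc u = (w * algebraMap R (Rp R 𝔭) s) • u := by rw [mul_comm, hw, one_smul]
    _ = w • ((algebraMap R (Rp R 𝔭) s) • u) := by rw [mul_smul]
    _ = w • ((algebraMap R (Rp R 𝔭) s) • v) := by rw [h']
    _ = (w * algebraMap R (Rp R 𝔭) s) • v := by rw [mul_smul]
    _ = v := by rw [mul_comm, hw, one_smul]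

/-- `Ep` is divisible. -/
theorem ep_divisible {r : R} (hr : r ≠ 0) (d : Ep R 𝔭) : ∃ d' : Ep R 𝔭, r • d' = d := by
  obtain ⟨y, rfl⟩ := Submodule.Quotient.mk_surjective _ d
  have hr' : KofR R 𝔭 r ≠ 0 := fun h => hr (injRKp (𝔭 := 𝔭) (by rw [h, map_zero]))
  refine ⟨Submodule.Quotient.mk ((KofR R 𝔭 r)⁻¹ * y), ?_⟩
  rw [← Submodule.Quotient.mk_smul, smulRKp, ← mul_assoc, mul_inv_cancel₀ hr', one_mul]

theorem dvrRp (h𝔭0 : 𝔭 ≠ ⊥) : IsDiscreteValuationRing (Rp R 𝔭) :=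
  IsLocalization.AtPrime.isDiscreteValuationRing_of_dedekind_domain R h𝔭0 _

/-- the image of π in the localization is irreducible -/
theorem pi_irred (h𝔭0 : 𝔭 ≠ ⊥) {π : R} (hπ : π ∈ 𝔭) (hπ2 : π ∉ 𝔭 ^ 2) : Irreducible (algebraMap R (Rp R 𝔭) π) := by
  haveI := dvrRp (R := R) (𝔭 := 𝔭) h𝔭0
  rw [IsDiscreteValuationRing.irreducible_iff_uniformizer]
  obtain ⟨ϖ₀, hϖ₀⟩ := IsDiscreteValuationRing.exists_irreducible (Rp R 𝔭)
  have hm : IsLocalRing.maximalIdeal (Rp R 𝔭) = Ideal.span {ϖ₀} := hϖ₀.maximalIdeal_eq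
  have hπm : algebraMap R (Rp R 𝔭) π ∈ IsLocalRing.maximalIdeal (Rp R 𝔭) :=
    (IsLocalization.AtPrime.to_map_mem_maximal_iff _ 𝔭 π).mpr hπ
  rw [hm, Ideal.mem_span_singleton'] at hπm
  obtain ⟨a, ha⟩ := hπm
  have hamem : a ∉ IsLocalRing.maximalIdeal (Rp R 𝔭) := by
    intro hmem
    have h2 : algebraMap R (Rp R 𝔭) π ∈ (IsLocalRing.maximalIdeal (Rp R 𝔭)) ^ 2 := by
      rw [← ha, pow_two]
      exact Ideal.mul_mem_mul hmem (hm ▸ Ideal.subset_span rfl : ϖ₀ ∈ IsLocalRing.maximalIdeal (Rp R 𝔭))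
    rw [← Localization.AtPrime.map_eq_maximalIdeal, ← Ideal.map_pow] at h2
    rw [IsLocalization.mem_map_algebraMap_iff (M := 𝔭.primeCompl)] at h2
    obtain ⟨⟨⟨b, hb⟩, ⟨s, hs⟩⟩, heq⟩ := h2
    simp only at heq
    rw [← map_mul] at heq
    obtain ⟨⟨t, ht⟩, hteq⟩ := (IsLocalization.eq_iff_exists 𝔭.primeCompl _).mp heq
    have hmem2 : t * (π * s) ∈ 𝔭 ^ 2 := by
      rw [hteq]
      exact Ideal.mul_mem_left _ _ hb
    have hps : π * s ∈ 𝔭 ^ 2 := aux_unsat h𝔭 h𝔭0 ht hmem2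
    rw [mul_comm] at hps
    exact hπ2 (aux_unsat h𝔭 h𝔭0 hs hps)
  have haunit : IsUnit a := by
    by_contra hnu
    exact hamem (IsLocalRing.mem_maximalIdeal _ |>.mpr hnu)
  obtain ⟨au, rfl⟩ := haunit
  rw [hm]
  apply le_antisymm
  · rw [Ideal.span_singleton_le_iff_mem, Ideal.mem_span_singleton']
    refine ⟨(au⁻¹ : (Rp R 𝔭)ˣ), ?_⟩
    have := congrArg (fun z => ((au⁻¹ : (Rp R 𝔭)ˣ) : Rp R 𝔭) * z) ha
    simpa [← mul_assoc] using this.symm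
  · rw [Ideal.span_singleton_le_iff_mem, ← ha, Ideal.mem_span_singleton']
    exact ⟨au, rfl⟩


theorem kofR_pi : KofR R 𝔭 π = algebraMap (Rp R 𝔭) (Kp R 𝔭) (algebraMap R (Rp R 𝔭) π) := rfl

theorem kpi_ne (hπ2 : π ∉ 𝔭 ^ 2) : KofR R 𝔭 π ≠ 0 := by
  intro h
  have hπ0 : π = 0 := injRKp (𝔭 := 𝔭) (by rw [h, map_zero])
  exact hπ2 (hπ0 ▸ (𝔭 ^ 2).zero_mem)

/-- the sequence of generators of the Prüfer quotient -/
noncomputable def cE (j : ℕ) : Ep R 𝔭 :=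
  Submodule.Quotient.mk ((KofR R 𝔭 π ^ j)⁻¹)

theorem ep_smul_comm (r : R) (r' : Rp R 𝔭) (x : Ep R 𝔭) : r • r' • x = r' • r • x := by
  rw [← algebraMap_smul (Rp R 𝔭) r x, ← algebraMap_smul (Rp R 𝔭) r (r' • x),
    smul_smul, smul_smul, mul_comm]

theorem ep_pow_smul_cE (hπ2 : π ∉ 𝔭 ^ 2) (i j : ℕ) :
    π ^ i • cE (𝔭 := 𝔭) (π := π) (i + j) = cE (𝔭 := 𝔭) (π := π) j := by
  unfold cE
  rw [← Submodule.Quotient.mk_smul, smulRKp, map_pow]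
  congr 1
  have h := kpi_ne (𝔭 := 𝔭) hπ2
  field_simp
  rw [← pow_add]

theorem cE_zero : cE (π := π) (𝔭 := 𝔭) 0 = 0 := by
  unfold cE
  rw [Submodule.Quotient.mk_eq_zero]
  exact ⟨1, by simp⟩

theorem cE_one_ne (h𝔭0 : 𝔭 ≠ ⊥) (hπ : π ∈ 𝔭) (hπ2 : π ∉ 𝔭 ^ 2) :
    cE (π := π) (𝔭 := 𝔭) 1 ≠ 0 := by
  intro h
  unfold cE at h
  rw [Submodule.Quotient.mk_eq_zero] at h
  obtain ⟨r', hr'⟩ := h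
  have h1 : algebraMap (Rp R 𝔭) (Kp R 𝔭) (r' * algebraMap R (Rp R 𝔭) π) = 1 := by
    rw [map_mul]
    have : (Algebra.linearMap (Rp R 𝔭) (Kp R 𝔭)) r' = algebraMap (Rp R 𝔭) (Kp R 𝔭) r' := rfl
    rw [this] at hr'
    rw [hr', pow_one, ← kofR_pi]
    exact inv_mul_cancel₀ (kpi_ne (𝔭 := 𝔭) hπ2)
  have h2 : r' * algebraMap R (Rp R 𝔭) π = 1 := by
    apply injRpKp (𝔭 := 𝔭)
    rw [h1, map_one]
  exact (pi_irred h𝔭0 hπ hπ2).not_isUnit (IsUnit.of_mul_eq_one _ (mul_comm r' _ ▸ h2))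

/-- if `π^k` kills `x : Ep` then all of `𝔭^k` does -/
theorem ep_ann_of_pi_pow (h𝔭 : 𝔭.IsPrime) (h𝔭0 : 𝔭 ≠ ⊥) (hπ : π ∈ 𝔭) (hπ2 : π ∉ 𝔭 ^ 2)
    {k : ℕ} {x : Ep R 𝔭} (hx : π ^ k • x = 0) : ∀ a ∈ 𝔭 ^ k, a • x = 0 := by
  intro a ha
  obtain ⟨s, hs, hsab⟩ := aux_smul_pow_le h𝔭 h𝔭0 hπ hπ2 k
  obtain ⟨c, hc⟩ := hsab a ha
  apply ep_smul_cancel (𝔭 := 𝔭) hs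
  rw [smul_smul, hc, smul_zero, mul_smul, hx, smul_zero]

theorem ep_ann_cE (h𝔭 : 𝔭.IsPrime) (h𝔭0 : 𝔭 ≠ ⊥) (hπ : π ∈ 𝔭) (hπ2 : π ∉ 𝔭 ^ 2) (j : ℕ) :
    ∀ a ∈ 𝔭 ^ j, a • cE (π := π) (𝔭 := 𝔭) j = 0 := by
  apply ep_ann_of_pi_pow h𝔭 h𝔭0 hπ hπ2
  have := ep_pow_smul_cE (𝔭 := 𝔭) hπ2 j 0
  rw [Nat.add_zero] at this
  rw [this, cE_zero]

/-- every element of `Ep` is annihilated by a power of `𝔭` -/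
theorem ep_primary (h𝔭0 : 𝔭 ≠ ⊥) (hπ : π ∈ 𝔭) (hπ2 : π ∉ 𝔭 ^ 2) (x : Ep R 𝔭) :
    ∃ k : ℕ, ∀ a ∈ 𝔭 ^ k, a • x = 0 := by
  haveI := dvrRp (R := R) (𝔭 := 𝔭) h𝔭0
  obtain ⟨y, rfl⟩ := Submodule.Quotient.mk_surjective _ x
  obtain ⟨a, b, hb, hy⟩ := IsFractionRing.div_surjective (A := Rp R 𝔭) y
  have hb0 : b ≠ 0 := nonZeroDivisors.ne_zero hb
  obtain ⟨n, u, hbu⟩ := IsDiscreteValuationRing.eq_unit_mul_pow_irreducible hb0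
    (pi_irred h𝔭0 hπ hπ2)
  refine ⟨n, ep_ann_of_pi_pow h𝔭 h𝔭0 hπ hπ2 ?_⟩
  rw [← Submodule.Quotient.mk_smul, Submodule.Quotient.mk_eq_zero]
  refine ⟨((u⁻¹ : (Rp R 𝔭)ˣ) : Rp R 𝔭) * a, ?_⟩
  show algebraMap (Rp R 𝔭) (Kp R 𝔭) (((u⁻¹ : (Rp R 𝔭)ˣ) : Rp R 𝔭) * a) = _
  rw [smulRKp, map_pow, ← hy, hbu]
  have hKu : algebraMap (Rp R 𝔭) (Kp R 𝔭) (u : Rp R 𝔭) ≠ 0 := fun h => u.ne_zero (injRpKp (𝔭 := 𝔭) (by rw [h, map_zero]))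
  have hKπ : KofR R 𝔭 π ≠ 0 := kpi_ne (𝔭 := 𝔭) hπ2
  have hKuinv : algebraMap (Rp R 𝔭) (Kp R 𝔭) ((u⁻¹ : (Rp R 𝔭)ˣ) : Rp R 𝔭) * algebraMap (Rp R 𝔭) (Kp R 𝔭) (u : Rp R 𝔭) = 1 := by
    rw [← map_mul]
    simp
  have hinv : algebraMap (Rp R 𝔭) (Kp R 𝔭) ((u⁻¹ : (Rp R 𝔭)ˣ) : Rp R 𝔭)
      = (algebraMap (Rp R 𝔭) (Kp R 𝔭) (u : Rp R 𝔭))⁻¹ := eq_inv_of_mul_eq_one_left hKuinv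
  rw [map_mul, hinv, map_mul, map_pow, ← kofR_pi]
  field_simp

theorem ep_rp_smul_mem (h𝔭0 : 𝔭 ≠ ⊥) (hπ : π ∈ 𝔭) (hπ2 : π ∉ 𝔭 ^ 2)
    (U : Submodule R (Ep R 𝔭)) {x : Ep R 𝔭} (hx : x ∈ U) (r' : Rp R 𝔭) : r' • x ∈ U := by
  obtain ⟨⟨a, s⟩, hr⟩ := IsLocalization.surj 𝔭.primeCompl r'
  obtain ⟨k, hk⟩ := ep_primary h𝔭0 hπ hπ2 x
  have hs : (s : R) ∉ 𝔭 := s.2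
  obtain ⟨c, hc⟩ := aux_exists_inv_mod h𝔭 h𝔭0 hs k
  have key : r' • x = (a * c) • x := by
    apply ep_smul_cancel (𝔭 := 𝔭) hs
    have hL : (s : R) • (r' • x) = a • x := by
      rw [← algebraMap_smul (Rp R 𝔭) (s : R) (r' • x), smul_smul,
        mul_comm (algebraMap R (Rp R 𝔭) (s : R)) r', hr, algebraMap_smul]
    have hx1 : (c * s) • x = x := by
      have h0 : (c * s - 1) • x = 0 := hk _ hc
      rw [sub_smul, one_smul, sub_eq_zero] at h0
      exact h0
    have hR : (s : R) • ((a * c) • x) = a • x := by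
      rw [smul_smul, show (s : R) * (a * c) = a * (c * s) by ring, mul_smul, hx1]
    rw [hL, hR]
  rw [key]
  exact U.smul_mem _ hx

/-- every nonzero element of `Ep` is a unit multiple of some `cE m`, `m ≥ 1` -/
theorem ep_decomp (h𝔭0 : 𝔭 ≠ ⊥) (hπ : π ∈ 𝔭) (hπ2 : π ∉ 𝔭 ^ 2) {v : Ep R 𝔭} (hv : v ≠ 0) :
    ∃ (m : ℕ) (w : (Rp R 𝔭)ˣ), 1 ≤ m ∧ v = ((w : Rp R 𝔭) • cE (𝔭 := 𝔭) (π := π) m) := by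
  haveI := dvrRp (R := R) (𝔭 := 𝔭) h𝔭0
  obtain ⟨y, rfl⟩ := Submodule.Quotient.mk_surjective _ v
  obtain ⟨a, b, hb, hy⟩ := IsFractionRing.div_surjective (A := Rp R 𝔭) y
  have hb0 : b ≠ 0 := nonZeroDivisors.ne_zero hb
  obtain ⟨i, ub, hbu⟩ := IsDiscreteValuationRing.eq_unit_mul_pow_irreducible hb0
    (pi_irred h𝔭0 hπ hπ2)
  have hKπ : KofR R 𝔭 π ≠ 0 := kpi_ne (𝔭 := 𝔭) hπ2
  have hKub : algebraMap (Rp R 𝔭) (Kp R 𝔭) (ub : Rp R 𝔭) ≠ 0 :=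
    fun h => ub.ne_zero (injRpKp (𝔭 := 𝔭) (by rw [h, map_zero]))
  have ha0 : a ≠ 0 := by
    intro h
    apply hv
    rw [Submodule.Quotient.mk_eq_zero]
    exact ⟨0, by simp [← hy, h]⟩
  obtain ⟨e, ua, hau⟩ := IsDiscreteValuationRing.eq_unit_mul_pow_irreducible ha0
    (pi_irred h𝔭0 hπ hπ2)
  rcases le_or_gt i e with hie | hie
  · exfalso
    apply hv
    rw [Submodule.Quotient.mk_eq_zero]
    refine ⟨(ua : Rp R 𝔭) * ((ub⁻¹ : (Rp R 𝔭)ˣ) : Rp R 𝔭) * algebraMap R (Rp R 𝔭) π ^ (e - i), ?_⟩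
    show algebraMap (Rp R 𝔭) (Kp R 𝔭) _ = _
    rw [← hy, hau, hbu]
    have hinv : algebraMap (Rp R 𝔭) (Kp R 𝔭) ((ub⁻¹ : (Rp R 𝔭)ˣ) : Rp R 𝔭)
        = (algebraMap (Rp R 𝔭) (Kp R 𝔭) (ub : Rp R 𝔭))⁻¹ := by
      apply eq_inv_of_mul_eq_one_left
      rw [← map_mul]
      simp
    have hgoal : algebraMap (Rp R 𝔭) (Kp R 𝔭)
        ((ua : Rp R 𝔭) * ((ub⁻¹ : (Rp R 𝔭)ˣ) : Rp R 𝔭) * algebraMap R (Rp R 𝔭) π ^ (e - i))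
        = algebraMap (Rp R 𝔭) (Kp R 𝔭) ((ua : Rp R 𝔭) * algebraMap R (Rp R 𝔭) π ^ e)
          / algebraMap (Rp R 𝔭) (Kp R 𝔭) ((ub : Rp R 𝔭) * algebraMap R (Rp R 𝔭) π ^ i) := by
      simp only [map_mul, map_pow, hinv, ← kofR_pi]
      rw [show e = (e - i) + i by omega, pow_add]
      field_simp
      rw [Nat.add_sub_cancel]
    exact hgoal
  · refine ⟨i - e, ua * ub⁻¹, by omega, ?_⟩
    have : ((ua * ub⁻¹ : (Rp R 𝔭)ˣ) : Rp R 𝔭) • cE (𝔭 := 𝔭) (π := π) (i - e)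
        = Submodule.Quotient.mk (((ua * ub⁻¹ : (Rp R 𝔭)ˣ) : Rp R 𝔭) • (KofR R 𝔭 π ^ (i - e))⁻¹) :=
      (Submodule.Quotient.mk_smul _ _ _).symm
    rw [this]
    congr 1
    rw [← hy, hau, hbu]
    have hinv : algebraMap (Rp R 𝔭) (Kp R 𝔭) ((ub⁻¹ : (Rp R 𝔭)ˣ) : Rp R 𝔭)
        = (algebraMap (Rp R 𝔭) (Kp R 𝔭) (ub : Rp R 𝔭))⁻¹ := by
      apply eq_inv_of_mul_eq_one_left
      rw [← map_mul]
      simp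
    have hsmul : ((ua * ub⁻¹ : (Rp R 𝔭)ˣ) : Rp R 𝔭) • (KofR R 𝔭 π ^ (i - e))⁻¹
        = algebraMap (Rp R 𝔭) (Kp R 𝔭) ((ua : Rp R 𝔭) * ((ub⁻¹ : (Rp R 𝔭)ˣ) : Rp R 𝔭))
          * (KofR R 𝔭 π ^ (i - e))⁻¹ := Algebra.smul_def _ _
    rw [hsmul]
    simp only [map_mul, map_pow, hinv, ← kofR_pi]
    rw [show i = (i - e) + e by omega, pow_add]
    field_simp
    rw [Nat.add_sub_cancel]

theorem ep_top (h𝔭0 : 𝔭 ≠ ⊥) (hπ : π ∈ 𝔭) (hπ2 : π ∉ 𝔭 ^ 2) (U : Submodule R (Ep R 𝔭))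
    (hU : ∀ n : ℕ, ∃ v ∈ U, π ^ n • v ≠ 0) : U = ⊤ := by
  have hpowzero : ∀ (m j : ℕ), m ≤ j → π ^ j • cE (𝔭 := 𝔭) (π := π) m = 0 := by
    intro m j hmj
    rw [show j = (j - m) + m by omega, pow_add, mul_smul]
    have h1 : π ^ m • cE (𝔭 := 𝔭) (π := π) m = 0 := by
      have := ep_pow_smul_cE (𝔭 := 𝔭) hπ2 m 0
      rw [Nat.add_zero] at this
      rw [this, cE_zero]
    rw [h1, smul_zero]
  have hcE : ∀ j, cE (𝔭 := 𝔭) (π := π) j ∈ U := by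
    intro j
    obtain ⟨v, hvU, hvj⟩ := hU j
    have hv0 : v ≠ 0 := fun h => hvj (by rw [h, smul_zero])
    obtain ⟨m, w, hm1, rfl⟩ := ep_decomp h𝔭0 hπ hπ2 hv0
    have hjm : j < m := by
      by_contra hcon
      push_neg at hcon
      apply hvj
      rw [ep_smul_comm, hpowzero m j hcon, smul_zero]
    have hcm : cE (𝔭 := 𝔭) (π := π) m ∈ U := by
      have h1 := ep_rp_smul_mem h𝔭0 hπ hπ2 U hvU ((w⁻¹ : (Rp R 𝔭)ˣ) : Rp R 𝔭)
      rwa [smul_smul, Units.inv_mul, one_smul] at h1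
    have h2 := ep_pow_smul_cE (𝔭 := 𝔭) (π := π) hπ2 (m - j) j
    rw [show m - j + j = m by omega] at h2
    rw [← h2]
    exact U.smul_mem _ hcm
  rw [eq_top_iff]
  intro x _
  by_cases hx : x = 0
  · rw [hx]; exact U.zero_mem
  · obtain ⟨m, w, hm1, rfl⟩ := ep_decomp h𝔭0 hπ hπ2 hx
    exact ep_rp_smul_mem h𝔭0 hπ hπ2 U (hcE m) _

theorem ep_baer (h𝔭0 : 𝔭 ≠ ⊥) : Module.Baer R (Ep R 𝔭) := by
  intro I g
  by_cases hI : I = ⊥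
  · subst hI
    refine ⟨0, fun x mem => ?_⟩
    have hx0 : x = 0 := Submodule.mem_bot _ |>.mp mem
    subst hx0
    have hz : (⟨0, mem⟩ : (⊥ : Ideal R)) = 0 := rfl
    rw [hz]
    simp
  · classical
    obtain ⟨a₁, ha₁I, ha₁0⟩ := Submodule.exists_mem_ne_zero_of_ne_bot hI
    obtain ⟨dv, hdv1, hdv2⟩ := aux_exists_val h𝔭 ha₁0
    have hex : ∃ n, ¬ I ≤ 𝔭 ^ (n + 1) := ⟨dv, fun hle => hdv2 (hle ha₁I)⟩
    set d := Nat.find hex with hd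
    have hspec : ¬ I ≤ 𝔭 ^ (d + 1) := Nat.find_spec hex
    have hId : I ≤ 𝔭 ^ d := by
      rcases Nat.eq_zero_or_pos d with h0 | h0
      · rw [h0, pow_zero, Ideal.one_eq_top]
        exact le_top
      · have hmin := Nat.find_min hex (m := d - 1) (by omega)
        rw [not_not] at hmin
        have : d - 1 + 1 = d := by omega
        rwa [this] at hmin
    obtain ⟨a₀, ha₀I, ha₀n⟩ := SetLike.not_le_iff_exists.mp hspec
    have ha₀d : a₀ ∈ 𝔭 ^ d := hId ha₀I
    have ha₀0 : a₀ ≠ 0 := fun h => ha₀n (h ▸ (𝔭 ^ (d + 1)).zero_mem)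
    obtain ⟨e, he⟩ := ep_divisible (𝔭 := 𝔭) ha₀0 (g ⟨a₀, ha₀I⟩)
    refine ⟨LinearMap.toSpanSingleton R _ e, ?_⟩
    intro x mem
    obtain ⟨s, hs, c, hsc⟩ := aux_div h𝔭 ha₀d ha₀n (hId mem)
    apply ep_smul_cancel (𝔭 := 𝔭) hs
    rw [LinearMap.toSpanSingleton_apply]
    have h1 : s • (x • e) = c • (a₀ • e) := by
      rw [smul_smul, smul_smul, hsc]
    have h2 : s • g ⟨x, mem⟩ = c • g ⟨a₀, ha₀I⟩ := by
      rw [← map_smul, ← map_smul]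
      congr 1
      apply Subtype.ext
      show s • x = c • a₀
      simpa [smul_eq_mul] using hsc
    rw [h1, h2, he]

end PrueferLemmas

section PrimaryMod
variable {R : Type w} [CommRing R] [IsDomain R] [IsDedekindDomain R]
variable {𝔭 : Ideal R} {M : Type*} [AddCommGroup M] [Module R M]

theorem pm_smul_cancel (h𝔭 : 𝔭.IsPrime) (h𝔭0 : 𝔭 ≠ ⊥) {s : R} (hs : s ∉ 𝔭) {x : M}
    (htor : ∃ k, ∀ a ∈ 𝔭 ^ k, a • x = 0) (h : s • x = 0) : x = 0 := by
  obtain ⟨k, hk⟩ := htor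
  obtain ⟨c, hc⟩ := aux_exists_inv_mod h𝔭 h𝔭0 hs k
  have h0 : (c * s - 1) • x = 0 := hk _ hc
  rw [sub_smul, one_smul, sub_eq_zero] at h0
  rw [← h0, mul_smul, h, smul_zero]

theorem pm_mem_of_smul_mem (h𝔭 : 𝔭.IsPrime) (h𝔭0 : 𝔭 ≠ ⊥) {s : R} (hs : s ∉ 𝔭) {x : M}
    (htor : ∃ k, ∀ a ∈ 𝔭 ^ k, a • x = 0) {U : Submodule R M} (h : s • x ∈ U) : x ∈ U := by
  obtain ⟨k, hk⟩ := htor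
  obtain ⟨c, hc⟩ := aux_exists_inv_mod h𝔭 h𝔭0 hs k
  have h0 : (c * s - 1) • x = 0 := hk _ hc
  rw [sub_smul, one_smul, sub_eq_zero] at h0
  rw [← h0, mul_smul]
  exact U.smul_mem c h

theorem pm_pi_pow_ann (h𝔭 : 𝔭.IsPrime) (h𝔭0 : 𝔭 ≠ ⊥) {π : R} (hπ : π ∈ 𝔭) (hπ2 : π ∉ 𝔭 ^ 2)
    (htorall : ∀ y : M, ∃ k, ∀ a ∈ 𝔭 ^ k, a • y = 0)
    {x : M} {k : ℕ} (h : π ^ k • x = 0) : ∀ a ∈ 𝔭 ^ k, a • x = 0 := by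
  intro a ha
  obtain ⟨s, hs, hsab⟩ := aux_smul_pow_le h𝔭 h𝔭0 hπ hπ2 k
  obtain ⟨c, hc⟩ := hsab a ha
  apply pm_smul_cancel h𝔭 h𝔭0 hs (htorall _)
  rw [smul_smul, hc, mul_smul, h, smul_zero]

end PrimaryMod

section Step
variable {R : Type w} [CommRing R] [IsDomain R] [IsDedekindDomain R]
variable {𝔭 : Ideal R} [h𝔭 : 𝔭.IsPrime]

theorem step_lemma (h𝔭0 : 𝔭 ≠ ⊥) {π : R} (hπ : π ∈ 𝔭) (hπ2 : π ∉ 𝔭 ^ 2)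
    {T : Type w} [AddCommGroup T] [Module R T]
    (hprimary : ∀ t : T, ∃ k : ℕ, ∀ a ∈ 𝔭 ^ k, a • t = 0)
    (hTub : ∀ k : ℕ, ∃ t : T, π ^ k • t ≠ 0)
    (S : Submodule R T) (f : S →ₗ[R] Ep R 𝔭) (m : ℕ) (hSb : ∀ x ∈ S, π ^ m • x = 0) (n : ℕ) :
    ∃ (S' : Submodule R T) (hle : S ≤ S') (f' : S' →ₗ[R] Ep R 𝔭) (m' : ℕ),
      (∀ x ∈ S', π ^ m' • x = 0) ∧
      (∀ (x : T) (hx : x ∈ S) (hx' : x ∈ S'), f' ⟨x, hx'⟩ = f ⟨x, hx⟩) ∧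
      (∃ v ∈ LinearMap.range f', π ^ n • v ≠ 0) := by
  classical
  -- find t whose image mod S has order > n
  have ht : ∃ t : T, π ^ n • t ∉ S := by
    by_contra hcon
    push_neg at hcon
    obtain ⟨t0, ht0⟩ := hTub (m + n)
    apply ht0
    have h1 : π ^ m • (π ^ n • t0) = 0 := hSb _ (hcon t0)
    rwa [smul_smul, ← pow_add] at h1
  obtain ⟨t, htS⟩ := ht
  -- the colon ideal
  set I : Ideal R := S.comap (LinearMap.toSpanSingleton R T t) with hIdef
  have hImem : ∀ a : R, a ∈ I ↔ a • t ∈ S := by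
    intro a
    rw [hIdef]
    simp [LinearMap.toSpanSingleton_apply]
  have hIP : I ≤ 𝔭 ^ (n + 1) := by
    intro a haI
    by_cases ha0 : a = 0
    · rw [ha0]; exact (𝔭 ^ (n + 1)).zero_mem
    obtain ⟨d, hd1, hd2⟩ := aux_exists_val h𝔭 ha0
    by_cases hdn : n + 1 ≤ d
    · exact Ideal.pow_le_pow_right hdn hd1
    · exfalso
      push_neg at hdn
      have hdn' : d ≤ n := by omega
      obtain ⟨s, hs, c, hsc⟩ := aux_div h𝔭 hd1 hd2 (Ideal.pow_mem_pow hπ d)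
      -- s * π^d = c * a
      have h1 : s • (π ^ d • t) = c • (a • t) := by
        rw [smul_smul, smul_smul, hsc]
      have h2 : s • (π ^ d • t) ∈ S := by
        rw [h1]
        exact S.smul_mem c ((hImem a).mp haI)
      have h3 : π ^ d • t ∈ S := pm_mem_of_smul_mem h𝔭 h𝔭0 hs (hprimary _) h2
      apply htS
      have h4 : π ^ n • t = π ^ (n - d) • (π ^ d • t) := by
        rw [smul_smul, ← pow_add, show n - d + d = n by omega]
      rw [h4]
      exact S.smul_mem _ h3
  -- the map from the colon ideal
  let φ : I →ₗ[R] Ep R 𝔭 :=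
    { toFun := fun a => f ⟨(a : R) • t, (hImem _).mp a.2⟩
      map_add' := by
        intro a b
        have harg : (⟨((a + b : I) : R) • t, (hImem _).mp (a + b).2⟩ : S)
            = ⟨(a : R) • t, (hImem _).mp a.2⟩ + ⟨(b : R) • t, (hImem _).mp b.2⟩ := by
          apply Subtype.ext
          show ((a + b : I) : R) • t = (a : R) • t + (b : R) • t
          rw [Submodule.coe_add, add_smul]
        rw [harg, map_add]
      map_smul' := by
        intro r a
        have harg : (⟨((r • a : I) : R) • t, (hImem _).mp (r • a).2⟩ : S)
            = r • ⟨(a : R) • t, (hImem _).mp a.2⟩ := by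
          apply Subtype.ext
          show ((r • a : I) : R) • t = r • ((a : R) • t)
          rw [Submodule.coe_smul, smul_smul, smul_eq_mul]
        rw [harg, map_smul]
        rfl }
  have hφ : ∀ (a : R) (ha : a ∈ I), φ ⟨a, ha⟩ = f ⟨a • t, (hImem _).mp ha⟩ := fun a ha => rfl
  -- extend by Baer's criterion
  obtain ⟨ψ, hψ⟩ := ep_baer (𝔭 := 𝔭) h𝔭0 I φ
  set v₀ : Ep R 𝔭 := ψ 1 with hv₀
  have hv₀prop : ∀ (a : R) (ha : a ∈ I), a • v₀ = f ⟨a • t, (hImem _).mp ha⟩ := by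
    intro a ha
    rw [hv₀, ← map_smul, smul_eq_mul, mul_one, hψ a ha, hφ]
  -- adjust so that the new value has large order
  have hv : ∃ v : Ep R 𝔭, (∀ (a : R) (ha : a ∈ I), a • v = f ⟨a • t, (hImem _).mp ha⟩) ∧
      π ^ n • v ≠ 0 := by
    by_cases hv0 : π ^ n • v₀ = 0
    · refine ⟨v₀ + cE (𝔭 := 𝔭) (π := π) (n + 1), ?_, ?_⟩
      · intro a ha
        rw [smul_add, hv₀prop a ha, ep_ann_cE h𝔭 h𝔭0 hπ hπ2 (n + 1) a (hIP ha), add_zero]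
      · rw [smul_add, hv0, zero_add]
        rw [ep_pow_smul_cE (𝔭 := 𝔭) (π := π) hπ2 n 1]
        exact cE_one_ne h𝔭0 hπ hπ2
    · exact ⟨v₀, hv₀prop, hv0⟩
  obtain ⟨v, hvprop, hvn⟩ := hv
  -- build the extension on S ⊔ span {t}
  let h0 : S × R →ₗ[R] T := S.subtype.coprod (LinearMap.toSpanSingleton R T t)
  let g : S × R →ₗ[R] Ep R 𝔭 :=
    f.comp (LinearMap.fst R S R) + (LinearMap.snd R S R).smulRight v
  have hg : ∀ p : S × R, g p = f p.1 + p.2 • v := fun p => rfl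
  have hh0 : ∀ p : S × R, h0 p = (p.1 : T) + p.2 • t := fun p => rfl
  have hker : LinearMap.ker h0 ≤ LinearMap.ker g := by
    intro p hp
    rw [LinearMap.mem_ker] at hp ⊢
    have hsum : (p.1 : T) + p.2 • t = 0 := by rw [← hh0 p, hp]
    have hpt : p.2 • t = -(p.1 : T) := by
      rw [eq_neg_iff_add_eq_zero, add_comm]
      exact hsum
    have hmem : p.2 • t ∈ S := by
      rw [hpt]
      exact S.neg_mem p.1.2
    have hI2 : p.2 ∈ I := (hImem _).mpr hmem
    rw [hg, hvprop p.2 hI2, ← map_add]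
    have harg : (p.1 + ⟨p.2 • t, (hImem _).mp hI2⟩ : S) = 0 := by
      apply Subtype.ext
      show (p.1 : T) + p.2 • t = 0
      exact hsum
    rw [harg, map_zero]
  let S' : Submodule R T := S ⊔ Submodule.span R {t}
  have hrange : LinearMap.range h0 = S' := by
    show LinearMap.range (S.subtype.coprod (LinearMap.toSpanSingleton R T t)) = _
    rw [LinearMap.range_coprod, Submodule.range_subtype, ← LinearMap.span_singleton_eq_range]
  let eqv := LinearMap.quotKerEquivRange h0
  let gq := (LinearMap.ker h0).liftQ g hker
  let ofeq : S' ≃ₗ[R] LinearMap.range h0 := LinearEquiv.ofEq _ _ hrange.symm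
  let f' : S' →ₗ[R] Ep R 𝔭 := gq.comp ((eqv.symm.toLinearMap).comp ofeq.toLinearMap)
  have hf'p : ∀ (p : S × R) (x : T) (hx' : x ∈ S'), h0 p = x → f' ⟨x, hx'⟩ = g p := by
    rintro p x hx' rfl
    have h1 : eqv (Submodule.Quotient.mk p) = ofeq ⟨h0 p, hx'⟩ := by
      apply Subtype.ext
      rw [LinearMap.quotKerEquivRange_apply_mk]
      rfl
    show gq (eqv.symm (ofeq ⟨h0 p, hx'⟩)) = g p
    rw [← h1, LinearEquiv.symm_apply_apply]
    exact Submodule.liftQ_apply _ g p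
  have hle : S ≤ S' := le_sup_left
  have hmemt : t ∈ S' := Submodule.mem_sup_right (Submodule.mem_span_singleton_self t)
  obtain ⟨kt, hkt⟩ := hprimary t
  have hπt : π ^ kt • t = 0 := hkt _ (Ideal.pow_mem_pow hπ kt)
  refine ⟨S', hle, f', m + kt, ?_, ?_, ?_⟩
  · intro x hx
    obtain ⟨y, hy, z, hz, rfl⟩ := Submodule.mem_sup.mp hx
    obtain ⟨a, rfl⟩ := Submodule.mem_span_singleton.mp hz
    rw [smul_add]
    have h6 : π ^ (m + kt) • y = 0 := by
      rw [show m + kt = kt + m by omega, pow_add, mul_smul, hSb y hy, smul_zero]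
    have h7 : π ^ (m + kt) • (a • t) = 0 := by
      rw [smul_smul, mul_comm, mul_smul, pow_add, mul_smul, hπt, smul_zero, smul_zero]
    rw [h6, h7, add_zero]
  · intro x hx hx'
    have hps : h0 (⟨x, hx⟩, 0) = x := by
      rw [hh0]
      simp
    rw [hf'p (⟨x, hx⟩, 0) x hx' hps, hg]
    simp
  · refine ⟨v, ⟨⟨t, hmemt⟩, ?_⟩, hvn⟩
    have hps : h0 (0, 1) = t := by
      rw [hh0]
      simp
    rw [hf'p (0, 1) t hmemt hps, hg]
    simp

end Step

/-- Let `R` be a Dedekind domain, `𝔭` a non-zero prime ideal and `T` a `𝔭`-primary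
(torsion) `R`-module that is not bounded (`𝔭 ^ n • T ≠ 0` for every `n ≥ 1`). Then
there is a surjective `R`-linear map from `T` onto a non-zero divisible module. -/
theorem exists_surjective_onto_divisible_of_unbounded_primary.{u}
    (R : Type u) [CommRing R] [IsDomain R] [IsDedekindDomain R]
    (𝔭 : Ideal R) (h𝔭 : 𝔭.IsPrime) (h𝔭0 : 𝔭 ≠ ⊥)
    (T : Type u) [AddCommGroup T] [Module R T]
    (hprimary : ∀ t : T, ∃ k : ℕ, ∀ a ∈ 𝔭 ^ k, a • t = 0)
    (hunbounded : ∀ n : ℕ, 1 ≤ n → ∃ a ∈ 𝔭 ^ n, ∃ t : T, a • t ≠ 0) :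
    ∃ (D : Type u) (_ : AddCommGroup D) (_ : Module R D) (f : T →ₗ[R] D),
      Function.Surjective f ∧ (∃ d : D, d ≠ 0) ∧
        (∀ r : R, r ≠ 0 → ∀ d : D, ∃ d' : D, r • d' = d) := by
  classical
  haveI : 𝔭.IsPrime := h𝔭
  obtain ⟨π, hπ, hπ2⟩ := aux_exists_pi h𝔭 h𝔭0
  have hTub : ∀ k : ℕ, ∃ t : T, π ^ k • t ≠ 0 := by
    intro k
    by_contra hcon
    push_neg at hcon
    obtain ⟨a, ha, t, hat⟩ := hunbounded (k + 1) (by omega)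
    exact hat (pm_pi_pow_ann h𝔭 h𝔭0 hπ hπ2 hprimary (hcon t) a
      (Ideal.pow_le_pow_right (by omega) ha))
  -- recursion producing an increasing chain of bounded submodules with maps
  let St := Σ (S : Submodule R T), (↥S →ₗ[R] Ep R 𝔭) × {m : ℕ // ∀ x ∈ S, π ^ m • x = 0}
  have hstep : ∀ (st : St) (n : ℕ), ∃ st' : St, st.1 ≤ st'.1 ∧
      (∀ (x : T) (hx : x ∈ st.1) (hx' : x ∈ st'.1), st'.2.1 ⟨x, hx'⟩ = st.2.1 ⟨x, hx⟩) ∧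
      (∃ v ∈ LinearMap.range st'.2.1, π ^ n • v ≠ 0) := by
    intro st n
    obtain ⟨S', hle, f', m', hb', hext, him⟩ :=
      step_lemma h𝔭0 hπ hπ2 hprimary hTub st.1 st.2.1 st.2.2.1 st.2.2.2 n
    exact ⟨⟨S', f', m', hb'⟩, hle, hext, him⟩
  let base : St := ⟨⊥, 0, 0, fun x hx => by
    have hx0 : x = 0 := Submodule.mem_bot _ |>.mp hx
    rw [hx0, smul_zero]⟩
  let chain : ℕ → St := fun n => Nat.rec base (fun n ih => Classical.choose (hstep ih n)) n
  have hchain : ∀ n : ℕ, (chain n).1 ≤ (chain (n + 1)).1 ∧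
      (∀ (x : T) (hx : x ∈ (chain n).1) (hx' : x ∈ (chain (n + 1)).1),
        (chain (n + 1)).2.1 ⟨x, hx'⟩ = (chain n).2.1 ⟨x, hx⟩) ∧
      (∃ v ∈ LinearMap.range (chain (n + 1)).2.1, π ^ n • v ≠ 0) :=
    fun n => Classical.choose_spec (hstep (chain n) n)
  have hmono : ∀ j i, i ≤ j → (chain i).1 ≤ (chain j).1 := by
    intro j
    induction j with
    | zero =>
      intro i hi
      rw [Nat.le_zero.mp hi]
    | succ j ih =>
      intro i hi
      by_cases h : i ≤ j
      · exact le_trans (ih i h) (hchain j).1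
      · have hij : i = j + 1 := by omega
        rw [hij]
  have hcompat : ∀ j i, i ≤ j → ∀ (x : T) (hxi : x ∈ (chain i).1) (hxj : x ∈ (chain j).1),
      (chain j).2.1 ⟨x, hxj⟩ = (chain i).2.1 ⟨x, hxi⟩ := by
    intro j
    induction j with
    | zero =>
      intro i hij x hxi hxj
      have h0 : i = 0 := by omega
      subst h0
      rfl
    | succ j ih =>
      intro i hij x hxi hxj
      by_cases h : i ≤ j
      · have hxj' : x ∈ (chain j).1 := hmono j i h hxi
        rw [(hchain j).2.1 x hxj' hxj]
        exact ih i h x hxi hxj'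
      · have hij' : i = j + 1 := by omega
        subst hij'
        rfl
  set Sω : Submodule R T := ⨆ n, (chain n).1 with hSωdef
  have hdir : Directed (· ≤ ·) (fun n => (chain n).1) := fun i j =>
    ⟨max i j, hmono _ i (le_max_left _ _), hmono _ j (le_max_right _ _)⟩
  have hmemiff : ∀ x : T, x ∈ Sω ↔ ∃ n, x ∈ (chain n).1 := fun x =>
    Submodule.mem_iSup_of_directed _ hdir
  have hidx : ∀ x : ↥Sω, ∃ n, (x : T) ∈ (chain n).1 := fun x => (hmemiff x).mp x.2
  have hidxmem : ∀ x : ↥Sω, (x : T) ∈ (chain (Nat.find (hidx x))).1 :=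
    fun x => Nat.find_spec (hidx x)
  let F0 : ↥Sω → Ep R 𝔭 := fun x => (chain (Nat.find (hidx x))).2.1 ⟨x, hidxmem x⟩
  have hF0 : ∀ (x : ↥Sω) (n : ℕ) (hx : (x : T) ∈ (chain n).1),
      F0 x = (chain n).2.1 ⟨x, hx⟩ := by
    intro x n hx
    have h1 : (x : T) ∈ (chain (max (Nat.find (hidx x)) n)).1 :=
      hmono _ n (le_max_right _ _) hx
    have h2 := hcompat (max (Nat.find (hidx x)) n) (Nat.find (hidx x)) (le_max_left _ _)
      x (hidxmem x) h1
    have h3 := hcompat (max (Nat.find (hidx x)) n) n (le_max_right _ _) x hx h1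
    show (chain (Nat.find (hidx x))).2.1 ⟨x, hidxmem x⟩ = _
    rw [← h2, h3]
  let F : ↥Sω →ₗ[R] Ep R 𝔭 :=
    { toFun := F0
      map_add' := by
        intro x y
        obtain ⟨i, hi⟩ := hidx x
        obtain ⟨j, hj⟩ := hidx y
        have hxk : (x : T) ∈ (chain (max i j)).1 := hmono _ i (le_max_left _ _) hi
        have hyk : (y : T) ∈ (chain (max i j)).1 := hmono _ j (le_max_right _ _) hj
        have hxyk : ((x + y : ↥Sω) : T) ∈ (chain (max i j)).1 :=
          (chain (max i j)).1.add_mem hxk hyk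
        rw [hF0 (x + y) (max i j) hxyk, hF0 x (max i j) hxk, hF0 y (max i j) hyk]
        have harg : (⟨((x + y : ↥Sω) : T), hxyk⟩ : (chain (max i j)).1)
            = ⟨(x : T), hxk⟩ + ⟨(y : T), hyk⟩ := by
          apply Subtype.ext
          rfl
        rw [harg, map_add]
      map_smul' := by
        intro r x
        obtain ⟨i, hi⟩ := hidx x
        have hxk : (x : T) ∈ (chain i).1 := hi
        show F0 (r • x) = r • F0 x
        have hrxk : ((r • x : ↥Sω) : T) ∈ (chain i).1 := by
          have : ((r • x : ↥Sω) : T) = r • (x : T) := rfl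
          rw [this]
          exact (chain i).1.smul_mem r hxk
        rw [hF0 (r • x) i hrxk, hF0 x i hxk]
        have harg : (⟨((r • x : ↥Sω) : T), hrxk⟩ : (chain i).1)
            = r • ⟨(x : T), hxk⟩ := by
          apply Subtype.ext
          rfl
        rw [harg, map_smul] }
  have hinj : Module.Injective R (Ep R 𝔭) := (ep_baer (𝔭 := 𝔭) h𝔭0).injective
  obtain ⟨gT, hgT⟩ := hinj.out Sω.subtype (Submodule.injective_subtype Sω) F
  have hrange : LinearMap.range gT = ⊤ := by
    apply ep_top h𝔭0 hπ hπ2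
    intro n
    obtain ⟨v, hvr, hvn⟩ := (hchain n).2.2
    obtain ⟨y, hy⟩ := hvr
    have hySω : ((y : T)) ∈ Sω := (le_iSup (fun n => (chain n).1) (n + 1)) y.2
    refine ⟨v, ?_, hvn⟩
    refine ⟨(y : T), ?_⟩
    have h1 := hgT ⟨(y : T), hySω⟩
    have h2 : F ⟨(y : T), hySω⟩ = (chain (n + 1)).2.1 y := by
      show F0 _ = _
      rw [hF0 ⟨(y : T), hySω⟩ (n + 1) y.2]
    show gT ((y : T)) = v
    calc gT ((y : T)) = F ⟨(y : T), hySω⟩ := h1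
      _ = (chain (n + 1)).2.1 y := h2
      _ = v := hy
  have hsurj : Function.Surjective gT := LinearMap.range_eq_top.mp hrange
  exact ⟨Ep R 𝔭, inferInstance, inferInstance, gT, hsurj,
    ⟨cE (𝔭 := 𝔭) (π := π) 1, cE_one_ne h𝔭0 hπ hπ2⟩,
    fun r hr d => ep_divisible (𝔭 := 𝔭) hr d⟩
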